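/- arXiv:1007.4284 — 2 statements merged into one kernel-verified Lean document; each statement's English description precedes it below -/
import Mathlib

section
/- Suppose f is a C² mapping from an open set Ω ⊆ ℝ^d into ℝ^d, a ∈ Ω, b = f(a), |det(Df(a))| ≥ c for some c > 0, and |D^α f_i(x)| ≤ C for all x ∈ Ω, all 1 ≤ i ≤ d and all multi-indices α with |α| ≤ 2, where C > 0. Let r₀ > 0 satisfy r₀ ≤ sup{r > 0 : B(a, r) ⊆ Ω}. Set r₁ = min{ c/(2·d^{7/2}·(d−1)!·C^d), r₀ } and r₂ = ( c/(4·d^{3/2}·(d−1)!·C^{d−1}) )·r₁. Then f restricted to B(a, r₁) is injective, its image f(B(a, r₁)) is an open set containing the ball B(b, r₂), and the inverse map is C². -/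
noncomputable section

open Real MeasureTheory Pointwise

abbrev Eu (d : ℕ) := EuclideanSpace ℝ (Fin d)

def ee (u : ℝ) : ℂ := Complex.exp (-2 * Real.pi * Complex.I * u)

def vecZ {d : ℕ} (m : Fin d → ℤ) : Eu d := (WithLp.equiv 2 (Fin d → ℝ)).symm fun i => (m i : ℝ)

def pd {d : ℕ} (L : List (Fin d)) (f : Eu d → ℝ) : Eu d → ℝ :=
  L.foldr (fun i g x => fderiv ℝ g x (EuclideanSpace.single i 1)) f

def pdm {d : ℕ} (μ : Fin d → ℕ) (f : Eu d → ℝ) : Eu d → ℝ :=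
  pd ((List.finRange d).flatMap fun i => List.replicate (μ i) i) f

def hess {d : ℕ} (f : Eu d → ℝ) (x : Eu d) : Matrix (Fin d) (Fin d) ℝ :=
  Matrix.of fun i j => pd [i, j] f x

def expS {d : ℕ} (T M : ℝ) (Ω : Set (Eu d)) (G F : Eu d → ℝ) : ℂ :=
  ∑' m : Fin d → ℤ, Set.indicator Ω (fun x => (G x : ℂ) * ee (T * F x)) ((M⁻¹ : ℝ) • vecZ m)

def latticeCount {d : ℕ} (s : Set (Eu d)) : ℕ := Nat.card {m : Fin d → ℤ // vecZ m ∈ s}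

def dirD {d : ℕ} (L : List (Eu d)) (f : Eu d → ℝ) : Eu d → ℝ :=
  L.foldr (fun v g x => fderiv ℝ g x v) f

def shiftB {d q : ℕ} (M : ℝ) (r : Fin q → Fin d → ℤ) (h : Fin q → ℕ) (u : Fin q → Bool) : Eu d :=
  ∑ l, ((h l : ℝ) / M * (if u l then 1 else 0)) • vecZ (r l)

def Gq {d q : ℕ} (M : ℝ) (G : Eu d → ℝ) (r : Fin q → Fin d → ℤ) (h : Fin q → ℕ) (x : Eu d) : ℝ :=
  ∏ u : Fin q → Bool, G (x + shiftB M r h u)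

def Fq {d q : ℕ} (M : ℝ) (F : Eu d → ℝ) (r : Fin q → Fin d → ℤ) (h : Fin q → ℕ) (x : Eu d) : ℝ :=
  ∫ u in Set.univ.pi fun _ : Fin q => Set.Ioo (0:ℝ) 1,
    dirD (List.ofFn fun l => vecZ (r l)) F (x + ∑ l, ((h l : ℝ) / M * u l) • vecZ (r l))

def Omq {d q : ℕ} (M : ℝ) (Ω : Set (Eu d)) (r : Fin q → Fin d → ℤ) (h : Fin q → ℕ) : Set (Eu d) :=
  {x ∈ Ω | ∀ u : Fin q → Bool, x + shiftB M r h u ∈ Ω}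

def Hpow (q : ℕ) (Hp : ℝ) (l : Fin q) : ℝ := Hp ^ ((2:ℝ) ^ (((l : ℕ) : ℤ) + 1 - (q : ℤ)))

def rhoeps {d : ℕ} (ε : ℝ) (ρ : Eu d → ℝ) (y : Eu d) : ℝ := ε ^ (-(d:ℤ)) * ρ (ε⁻¹ • y)

def convInd {d : ℕ} (s : Set (Eu d)) (ε : ℝ) (ρ : Eu d → ℝ) (x : Eu d) : ℝ :=
  ∫ y, Set.indicator s (fun _ => (1:ℝ)) y * rhoeps ε ρ (x - y)

def Neps {d : ℕ} (B : Set (Eu d)) (ε : ℝ) (ρ : Eu d → ℝ) (t : ℝ) : ℝ :=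
  ∑' k : Fin d → ℤ, convInd (t • B) ε ρ (vecZ k)

def ftSet {d : ℕ} (s : Set (Eu d)) (ξ : Eu d) : ℂ := ∫ x in s, ee (∑ i, x i * ξ i)

def ftFun {d : ℕ} (ρ : Eu d → ℝ) (ξ : Eu d) : ℂ := ∫ x, (ρ x : ℂ) * ee (∑ i, x i * ξ i)

section helpers

lemma detBound {n : ℕ} (M : Matrix (Fin n) (Fin n) ℝ) (C : ℝ)
    (h : ∀ i j, |M i j| ≤ C) : |M.det| ≤ n.factorial * C ^ n := by
  rw [Matrix.det_apply']
  calc |∑ σ : Equiv.Perm (Fin n), Equiv.Perm.sign σ * ∏ i, M (σ i) i|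
      ≤ ∑ σ : Equiv.Perm (Fin n), |(Equiv.Perm.sign σ : ℝ) * ∏ i, M (σ i) i| :=
        Finset.abs_sum_le_sum_abs _ _
    _ ≤ ∑ σ : Equiv.Perm (Fin n), C ^ n := by
        refine Finset.sum_le_sum fun σ _ => ?_
        rw [abs_mul]
        have h1 : |(Equiv.Perm.sign σ : ℝ)| = 1 := by
          rcases Int.units_eq_one_or (Equiv.Perm.sign σ) with h | h <;> simp [h]
        rw [h1, one_mul, Finset.abs_prod]
        calc ∏ i, |M (σ i) i| ≤ ∏ _i : Fin n, C :=
              Finset.prod_le_prod (fun _ _ => abs_nonneg _) (fun i _ => h _ _)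
          _ = C ^ n := by simp
    _ = n.factorial * C ^ n := by
        rw [Finset.sum_const]
        simp [Fintype.card_perm]

lemma adjBoundAux {n : ℕ} (M : Matrix (Fin (n+1)) (Fin (n+1)) ℝ) (C : ℝ) (hC : 0 ≤ C)
    (h : ∀ i j, |M i j| ≤ C) (i j : Fin (n+1)) :
    |M.adjugate i j| ≤ n.factorial * C ^ n := by
  rw [Matrix.adjugate_apply, Matrix.det_succ_row _ j]
  simp only [Matrix.updateRow_self]
  have key : ∀ k : Fin (n+1),
      |(-1:ℝ) ^ ((j:ℕ) + (k:ℕ)) * (Pi.single (M := fun _ => ℝ) i 1 k) *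
        ((M.updateRow j (Pi.single i 1)).submatrix j.succAbove k.succAbove).det|
      ≤ (if k = i then (1:ℝ) else 0) * (n.factorial * C ^ n) := by
    intro k
    rw [abs_mul, abs_mul, abs_pow, abs_neg, abs_one, one_pow, one_mul]
    have hsub : |((M.updateRow j (Pi.single i 1)).submatrix j.succAbove k.succAbove).det|
        ≤ n.factorial * C ^ n := by
      apply detBound
      intro l m
      have : (M.updateRow j (Pi.single i 1)).submatrix j.succAbove k.succAbove l m
          = M (j.succAbove l) (k.succAbove m) := by
        simp [Matrix.submatrix_apply, Matrix.updateRow_ne (Fin.succAbove_ne j l)]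
      rw [this]; exact h _ _
    by_cases hk : k = i
    · subst hk
      simp only [Pi.single_eq_same, abs_one, one_mul, if_pos]
      simpa using hsub
    · simp only [Pi.single_eq_of_ne hk, abs_zero, zero_mul, mul_zero, if_neg hk]
      positivity
  calc |∑ k : Fin (n+1), (-1:ℝ) ^ ((j:ℕ) + (k:ℕ)) * (Pi.single (M := fun _ => ℝ) i 1 k) *
        ((M.updateRow j (Pi.single i 1)).submatrix j.succAbove k.succAbove).det|
      ≤ ∑ k : Fin (n+1), (if k = i then (1:ℝ) else 0) * (n.factorial * C ^ n) :=
        le_trans (Finset.abs_sum_le_sum_abs _ _) (Finset.sum_le_sum fun k _ => key k)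
    _ = n.factorial * C ^ n := by simp

lemma adjBound {d : ℕ} (hd : 1 ≤ d) (M : Matrix (Fin d) (Fin d) ℝ) (C : ℝ) (hC : 0 ≤ C)
    (h : ∀ i j, |M i j| ≤ C) (i j : Fin d) :
    |M.adjugate i j| ≤ (d-1).factorial * C ^ (d-1) := by
  obtain ⟨n, rfl⟩ : ∃ n, d = n + 1 := ⟨d - 1, by omega⟩
  simpa using adjBoundAux M C hC h i j

lemma coordCS {d : ℕ} (v : Eu d) : ∑ j, |v j| ≤ Real.sqrt d * ‖v‖ := by
  have h := Real.sum_mul_le_sqrt_mul_sqrt Finset.univ (fun j => |v j|) (fun _ => 1)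
  simp only [mul_one] at h
  calc ∑ j, |v j| ≤ √(∑ j, |v j| ^ 2) * √(∑ _j : Fin d, (1:ℝ) ^ 2) := h
    _ = Real.sqrt d * ‖v‖ := by
        rw [EuclideanSpace.norm_eq]
        simp [sq_abs, mul_comm, Real.norm_eq_abs]

lemma funcNormLe {d : ℕ} (φ : Eu d →L[ℝ] ℝ) (B : ℝ) (hB : 0 ≤ B)
    (h : ∀ k, |φ (EuclideanSpace.single k 1)| ≤ B) : ‖φ‖ ≤ Real.sqrt d * B := by
  apply ContinuousLinearMap.opNorm_le_bound _ (by positivity)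
  intro v
  have hv : v = ∑ j, v j • EuclideanSpace.single j (1:ℝ) := by
    have := (EuclideanSpace.basisFun (Fin d) ℝ).sum_repr v
    simp only [EuclideanSpace.basisFun_apply, EuclideanSpace.basisFun_repr] at this
    exact this.symm
  calc ‖φ v‖ = |∑ j, v j * φ (EuclideanSpace.single j 1)| := by
        rw [Real.norm_eq_abs]; congr 1
        conv_lhs => rw [hv]
        rw [map_sum]; simp [smul_eq_mul]
    _ ≤ ∑ j, |v j| * B := by
        refine le_trans (Finset.abs_sum_le_sum_abs _ _) (Finset.sum_le_sum fun j _ => ?_)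
        rw [abs_mul]; exact mul_le_mul_of_nonneg_left (h j) (abs_nonneg _)
    _ = (∑ j, |v j|) * B := by rw [Finset.sum_mul]
    _ ≤ (Real.sqrt d * ‖v‖) * B := mul_le_mul_of_nonneg_right (coordCS v) hB
    _ = Real.sqrt d * B * ‖v‖ := by ring

lemma opNormLe {d : ℕ} (T : Eu d →L[ℝ] Eu d) (E : ℝ) (hE : 0 ≤ E)
    (h : ∀ i k, |T (EuclideanSpace.single k 1) i| ≤ E) : ‖T‖ ≤ d * E := by
  apply ContinuousLinearMap.opNorm_le_bound _ (by positivity)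
  intro v
  have hcoord : ∀ i, |(T v) i| ≤ Real.sqrt d * E * ‖v‖ := by
    intro i
    have h2 := funcNormLe ((EuclideanSpace.proj i : Eu d →L[ℝ] ℝ).comp T) E hE
      (fun k => by simpa using h i k)
    calc |(T v) i| = ‖((EuclideanSpace.proj i : Eu d →L[ℝ] ℝ).comp T) v‖ := by
          simp [Real.norm_eq_abs]
      _ ≤ ‖(EuclideanSpace.proj i : Eu d →L[ℝ] ℝ).comp T‖ * ‖v‖ :=
          ContinuousLinearMap.le_opNorm _ _
      _ ≤ Real.sqrt d * E * ‖v‖ := mul_le_mul_of_nonneg_right h2 (norm_nonneg _)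
  rw [EuclideanSpace.norm_eq]
  have hsq : ∀ i : Fin d, ‖(T v) i‖ ^ 2 ≤ (Real.sqrt d * E * ‖v‖)^2 := by
    intro i
    have := hcoord i
    rw [Real.norm_eq_abs]
    exact sq_le_sq' (by linarith [abs_nonneg ((T v) i)]) this
  calc √(∑ i, ‖(T v) i‖ ^ 2) ≤ √(∑ _i : Fin d, (Real.sqrt d * E * ‖v‖)^2) := by
        apply Real.sqrt_le_sqrt; exact Finset.sum_le_sum fun i _ => hsq i
    _ ≤ d * E * ‖v‖ := by
        rw [Finset.sum_const, Finset.card_univ, Fintype.card_fin, nsmul_eq_mul]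
        rw [show ((d:ℝ) * (Real.sqrt d * E * ‖v‖)^2) = (Real.sqrt d * (Real.sqrt d * E * ‖v‖))^2 by
          rw [mul_pow (Real.sqrt d) (Real.sqrt d * E * ‖v‖) 2,
            Real.sq_sqrt (Nat.cast_nonneg d)]]
        rw [Real.sqrt_sq (by positivity)]
        rw [← mul_assoc, ← mul_assoc, Real.mul_self_sqrt (Nat.cast_nonneg d)]

lemma entCLM {d : ℕ} (N : Matrix (Fin d) (Fin d) ℝ) (j i : Fin d) :
    (Matrix.toEuclideanCLM (n := Fin d) (𝕜 := ℝ) N) (EuclideanSpace.single j 1) i = N i j := by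
  have h1 : EuclideanSpace.single j (1:ℝ) = (WithLp.equiv 2 (Fin d → ℝ)).symm (Pi.single j 1) :=
    rfl
  rw [h1, WithLp.equiv_symm_apply, Matrix.toEuclideanCLM_toLp]
  simp

lemma clm_ext_basis {d : ℕ} (S T : Eu d →L[ℝ] Eu d)
    (h : ∀ j, S (EuclideanSpace.single j 1) = T (EuclideanSpace.single j 1)) : S = T := by
  apply ContinuousLinearMap.ext
  intro v
  have hv : v = ∑ j, v j • EuclideanSpace.single j (1:ℝ) := by
    have := (EuclideanSpace.basisFun (Fin d) ℝ).sum_repr v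
    simp only [EuclideanSpace.basisFun_apply, EuclideanSpace.basisFun_repr] at this
    exact this.symm
  rw [hv, map_sum, map_sum]
  exact Finset.sum_congr rfl fun j _ => by rw [_root_.map_smul, _root_.map_smul, h j]

lemma fderiv_component {d : ℕ} {f : Eu d → Eu d} {x : Eu d} (hf : DifferentiableAt ℝ f x)
    (i : Fin d) (v : Eu d) :
    fderiv ℝ (fun y => f y i) x v = (fderiv ℝ f x v) i := by
  have heq : (fun y => f y i) = (EuclideanSpace.proj (𝕜 := ℝ) i) ∘ f := rfl
  rw [heq, fderiv_comp x (EuclideanSpace.proj (𝕜 := ℝ) i).differentiableAt hf,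
    ContinuousLinearMap.fderiv]
  rfl

end helpers

set_option maxHeartbeats 2000000 in
/-- quantitative inverse function theorem. -/
theorem stmt7 (d : ℕ) (hd : 1 ≤ d)
    (Ω : Set (Eu d)) (hΩ : IsOpen Ω)
    (f : Eu d → Eu d) (hf : ContDiffOn ℝ 2 f Ω)
    (a : Eu d) (ha : a ∈ Ω) (b : Eu d) (hb : b = f a)
    (c C : ℝ) (hc : 0 < c) (hC : 0 < C)
    (hdet : c ≤ |(Matrix.of fun i j : Fin d =>
      fderiv ℝ (fun x => f x i) a (EuclideanSpace.single j 1)).det|)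
    (hder : ∀ (i : Fin d) (L : List (Fin d)), L.length ≤ 2 → ∀ x ∈ Ω,
      |pd L (fun x => f x i) x| ≤ C)
    (r₀ : ℝ) (hr₀ : 0 < r₀) (hball : Metric.ball a r₀ ⊆ Ω)
    (r₁ r₂ : ℝ)
    (hr₁ : r₁ = min (c / (2 * (d : ℝ) ^ ((7 : ℝ) / 2) * (Nat.factorial (d - 1)) * C ^ d)) r₀)
    (hr₂ : r₂ = c / (4 * (d : ℝ) ^ ((3 : ℝ) / 2) * (Nat.factorial (d - 1)) * C ^ (d - 1)) * r₁) :
    Set.InjOn f (Metric.ball a r₁) ∧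
    IsOpen (f '' Metric.ball a r₁) ∧
    Metric.ball b r₂ ⊆ f '' Metric.ball a r₁ ∧
    ∃ g : Eu d → Eu d, (∀ x ∈ Metric.ball a r₁, g (f x) = x) ∧
      ContDiffOn ℝ 2 g (f '' Metric.ball a r₁) := by
  classical
  -- basic positivity
  have hd0 : (0:ℝ) < d := by exact_mod_cast Nat.lt_of_lt_of_le Nat.zero_lt_one hd
  have hd1 : (1:ℝ) ≤ d := by exact_mod_cast hd
  have hs0 : 0 < Real.sqrt d := Real.sqrt_pos.mpr hd0
  have hs1 : (1:ℝ) ≤ Real.sqrt d := by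
    rw [show (1:ℝ) = Real.sqrt 1 by simp]; exact Real.sqrt_le_sqrt hd1
  have hsq : Real.sqrt d * Real.sqrt d = (d:ℝ) := Real.mul_self_sqrt hd0.le
  set F₁ : ℝ := ((d-1).factorial : ℝ) with hF₁
  have hF : (0:ℝ) < F₁ := by rw [hF₁]; exact_mod_cast (d-1).factorial_pos
  have hCd1 : (0:ℝ) < C ^ (d-1) := pow_pos hC _
  have hCd : (0:ℝ) < C ^ d := pow_pos hC _
  have hCpow : C ^ (d-1) * C = C ^ d := by
    rw [← pow_succ]; congr 1; omega
  -- rewrite the rpow constants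
  have h72 : (d:ℝ) ^ ((7:ℝ)/2) = (d:ℝ)^(3:ℕ) * Real.sqrt d := by
    rw [Real.sqrt_eq_rpow, show (7:ℝ)/2 = (3:ℝ) + 1/2 by norm_num, Real.rpow_add hd0]
    congr 1
    rw [← Real.rpow_natCast (d:ℝ) 3]
    norm_num
  have h32 : (d:ℝ) ^ ((3:ℝ)/2) = (d:ℝ) * Real.sqrt d := by
    rw [Real.sqrt_eq_rpow, show (3:ℝ)/2 = (1:ℝ) + 1/2 by norm_num, Real.rpow_add hd0,
      Real.rpow_one]
  have hr₁' : r₁ = min (c / (2 * ((d:ℝ)^(3:ℕ) * Real.sqrt d) * F₁ * C ^ d)) r₀ := by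
    rw [hr₁, h72]
  have hr₂' : r₂ = c / (4 * ((d:ℝ) * Real.sqrt d) * F₁ * C ^ (d-1)) * r₁ := by
    rw [hr₂, h32]
  have hr₁pos : 0 < r₁ := by
    rw [hr₁']; exact lt_min (by positivity) hr₀
  have hr₁r₀ : r₁ ≤ r₀ := by rw [hr₁']; exact min_le_right _ _
  have hsub : Metric.ball a r₁ ⊆ Ω :=
    subset_trans (Metric.ball_subset_ball hr₁r₀) hball
  -- constants
  set E₀ : ℝ := F₁ * C ^ (d-1) / c with hE₀
  have hE₀pos : 0 < E₀ := by positivity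
  set J : ℝ := d * E₀ with hJ
  have hJ0 : 0 < J := by positivity
  set Dr : ℝ := d * (Real.sqrt d * C * r₁) with hDr
  have hDr0 : 0 < Dr := by positivity
  -- key inequality 1 : Dr ≤ (2 d J)⁻¹
  have fact1 : Dr ≤ (2 * d * J)⁻¹ := by
    have hr : r₁ ≤ c / (2 * ((d:ℝ)^(3:ℕ) * Real.sqrt d) * F₁ * C ^ d) := by
      rw [hr₁']; exact min_le_left _ _
    have heq : (d:ℝ) * (Real.sqrt d * C * (c / (2 * ((d:ℝ)^(3:ℕ) * Real.sqrt d) * F₁ * C ^ d)))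
        = (2 * d * J)⁻¹ := by
      rw [hJ, hE₀]
      rw [← hCpow]
      field_simp
    calc Dr = d * (Real.sqrt d * C * r₁) := hDr
      _ ≤ d * (Real.sqrt d * C * (c / (2 * ((d:ℝ)^(3:ℕ) * Real.sqrt d) * F₁ * C ^ d))) := by
          apply mul_le_mul_of_nonneg_left _ hd0.le
          apply mul_le_mul_of_nonneg_left hr (by positivity)
      _ = (2 * d * J)⁻¹ := heq
  -- key inequality 2 : r₂ ≤ r₁ / (4 * J)
  have fact2 : r₂ ≤ r₁ / (4 * J) := by
    have heq : c / (4 * ((d:ℝ) * Real.sqrt d) * F₁ * C ^ (d-1)) = 1 / (4 * Real.sqrt d * J) := by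
      rw [hJ, hE₀]
      field_simp
      try tauto
    rw [hr₂', heq]
    rw [div_eq_mul_inv r₁ (4*J), one_div, ← mul_comm r₁ _]
    apply mul_le_mul_of_nonneg_left _ hr₁pos.le
    apply inv_anti₀ (by positivity)
    nlinarith [hJ0, hs1]
  -- the matrix and its inverse
  set M : Matrix (Fin d) (Fin d) ℝ := Matrix.of fun i j : Fin d =>
      fderiv ℝ (fun x => f x i) a (EuclideanSpace.single j 1) with hM
  have hMent : ∀ i j, |M i j| ≤ C := by
    intro i j
    have := hder i [j] (by norm_num) a ha
    exact this
  have hMdet0 : M.det ≠ 0 := by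
    intro h0
    rw [h0] at hdet; simp at hdet; linarith
  have hMunit : IsUnit M.det := isUnit_iff_ne_zero.mpr hMdet0
  have hMinv_ent : ∀ i j, |M⁻¹ i j| ≤ E₀ := by
    intro i j
    rw [Matrix.inv_def, Ring.inverse_eq_inv']
    have hadj : |M.adjugate i j| ≤ F₁ * C ^ (d-1) :=
      adjBound hd M C hC.le hMent i j
    have : |(M.det⁻¹ • M.adjugate) i j| = |M.det|⁻¹ * |M.adjugate i j| := by
      simp [Matrix.smul_apply, abs_mul, abs_inv]
    rw [this]
    have hdinv : |M.det|⁻¹ ≤ c⁻¹ := by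
      apply inv_anti₀ hc hdet
    calc |M.det|⁻¹ * |M.adjugate i j| ≤ c⁻¹ * (F₁ * C ^ (d-1)) := by
          apply mul_le_mul hdinv hadj (abs_nonneg _) (by positivity)
      _ = E₀ := by rw [hE₀]; field_simp
  -- the linear equivalence A
  set G : Eu d →L[ℝ] Eu d := Matrix.toEuclideanCLM (n := Fin d) (𝕜 := ℝ) M with hG
  set H : Eu d →L[ℝ] Eu d := Matrix.toEuclideanCLM (n := Fin d) (𝕜 := ℝ) M⁻¹ with hH
  have hHG : ∀ x, H (G x) = x := by
    intro x
    have h1 : H.comp G = ContinuousLinearMap.id ℝ (Eu d) := by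
      have h2 : (M⁻¹) * M = 1 := Matrix.nonsing_inv_mul M hMunit
      have h3 := congrArg (Matrix.toEuclideanCLM (n := Fin d) (𝕜 := ℝ)) h2
      rw [map_mul, map_one] at h3
      exact h3
    exact DFunLike.congr_fun h1 x
  have hGH : ∀ x, G (H x) = x := by
    intro x
    have h1 : G.comp H = ContinuousLinearMap.id ℝ (Eu d) := by
      have h2 : M * M⁻¹ = 1 := Matrix.mul_nonsing_inv M hMunit
      have h3 := congrArg (Matrix.toEuclideanCLM (n := Fin d) (𝕜 := ℝ)) h2
      rw [map_mul, map_one] at h3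
      exact h3
    exact DFunLike.congr_fun h1 x
  set A : Eu d ≃L[ℝ] Eu d := ContinuousLinearEquiv.equivOfInverse G H hHG hGH with hA
  have hAcoe : (A : Eu d →L[ℝ] Eu d) = G := rfl
  have hAsymm : (A.symm : Eu d →L[ℝ] Eu d) = H := rfl
  -- differentiability basics
  have hfx : ∀ x ∈ Ω, DifferentiableAt ℝ f x := fun x hx =>
    (hf.contDiffAt (hΩ.mem_nhds hx)).differentiableAt (by norm_num)
  -- A coincides with fderiv f a
  have hGA : G = fderiv ℝ f a := by
    apply clm_ext_basis
    intro j
    ext i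
    rw [entCLM]
    rw [← fderiv_component (hfx a ha) i (EuclideanSpace.single j 1)]
    rfl
  -- norm bound on A.symm
  have hNA : ‖(A.symm : Eu d →L[ℝ] Eu d)‖ ≤ J := by
    rw [hAsymm, hJ]
    apply opNormLe _ E₀ hE₀pos.le
    intro i k
    rw [hH, entCLM]
    exact hMinv_ent i k
  have hNApos : 0 < ‖(A.symm : Eu d →L[ℝ] Eu d)‖ := by
    have he0 : ‖EuclideanSpace.single (⟨0, by omega⟩ : Fin d) (1:ℝ)‖ = 1 := by
      rw [EuclideanSpace.norm_single]; norm_num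
    by_contra hcon
    push_neg at hcon
    have h0 : ‖(A.symm : Eu d →L[ℝ] Eu d)‖ = 0 := le_antisymm hcon (norm_nonneg _)
    have hz : (A.symm : Eu d →L[ℝ] Eu d) = 0 := norm_eq_zero.mp h0
    have hsa := A.symm_apply_apply (EuclideanSpace.single (⟨0, by omega⟩ : Fin d) (1:ℝ))
    rw [show A.symm (A (EuclideanSpace.single (⟨0, by omega⟩ : Fin d) (1:ℝ)))
        = (A.symm : Eu d →L[ℝ] Eu d) (A (EuclideanSpace.single (⟨0, by omega⟩ : Fin d) (1:ℝ)))
        from rfl, hz] at hsa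
    simp only [ContinuousLinearMap.zero_apply] at hsa
    rw [← hsa] at he0
    simp at he0
  -- component functions of the derivative
  have hfi : ∀ i : Fin d, ContDiffOn ℝ 2 (fun y => f y i) Ω := fun i =>
    (EuclideanSpace.proj (𝕜 := ℝ) i).contDiff.comp_contDiffOn hf
  have hgdiff : ∀ (i j : Fin d) (x : Eu d), x ∈ Ω →
      DifferentiableAt ℝ (fun y => fderiv ℝ (fun z => f z i) y (EuclideanSpace.single j 1)) x := by
    intro i j x hx
    have h1 : ContDiffOn ℝ 1 (fderiv ℝ (fun z => f z i)) Ω :=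
      (hfi i).fderiv_of_isOpen hΩ (by norm_num)
    have h2 : DifferentiableOn ℝ (fderiv ℝ (fun z => f z i)) Ω :=
      h1.differentiableOn (by norm_num)
    have h3 : DifferentiableAt ℝ (fderiv ℝ (fun z => f z i)) x :=
      h2.differentiableAt (hΩ.mem_nhds hx)
    exact h3.clm_apply (differentiableAt_const _)
  have hgbound : ∀ (i j : Fin d) (x : Eu d), x ∈ Ω →
      ‖fderiv ℝ (fun y => fderiv ℝ (fun z => f z i) y (EuclideanSpace.single j 1)) x‖
        ≤ Real.sqrt d * C := by
    intro i j x hx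
    apply funcNormLe _ C hC.le
    intro k
    exact hder i [k, j] (by norm_num) x hx
  have hLip : ∀ (i j : Fin d), ∀ x ∈ Metric.ball a r₁,
      |fderiv ℝ (fun z => f z i) x (EuclideanSpace.single j 1)
        - fderiv ℝ (fun z => f z i) a (EuclideanSpace.single j 1)| ≤ Real.sqrt d * C * r₁ := by
    intro i j x hx
    have hmean := (convex_ball a r₁).norm_image_sub_le_of_norm_fderiv_le
      (f := fun y => fderiv ℝ (fun z => f z i) y (EuclideanSpace.single j 1))
      (fun z hz => hgdiff i j z (hsub hz)) (fun z hz => hgbound i j z (hsub hz))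
      (Metric.mem_ball_self hr₁pos) hx
    rw [Real.norm_eq_abs] at hmean
    calc |fderiv ℝ (fun z => f z i) x (EuclideanSpace.single j 1)
          - fderiv ℝ (fun z => f z i) a (EuclideanSpace.single j 1)|
        ≤ Real.sqrt d * C * ‖x - a‖ := hmean
      _ ≤ Real.sqrt d * C * r₁ := by
          apply mul_le_mul_of_nonneg_left _ (by positivity)
          rw [← dist_eq_norm]
          exact le_of_lt (Metric.mem_ball.mp hx)
  -- derivative close to A on the ball
  have hDfbound : ∀ x ∈ Metric.ball a r₁,
      ‖fderiv ℝ f x - (A : Eu d →L[ℝ] Eu d)‖ ≤ Dr := by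
    intro x hx
    rw [hDr]
    apply opNormLe (fderiv ℝ f x - (A : Eu d →L[ℝ] Eu d)) (Real.sqrt d * C * r₁) (by positivity)
    intro i k
    have hxa : ((fderiv ℝ f x - (A : Eu d →L[ℝ] Eu d)) (EuclideanSpace.single k 1)) i
        = fderiv ℝ (fun z => f z i) x (EuclideanSpace.single k 1)
          - fderiv ℝ (fun z => f z i) a (EuclideanSpace.single k 1) := by
      rw [ContinuousLinearMap.sub_apply]
      have hsubap : ∀ u v : Eu d, (u - v) i = u i - v i := fun u v => rfl
      rw [hsubap]
      congr 1
      · exact (fderiv_component (hfx x (hsub hx)) i _).symm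
      · rw [hAcoe]
        rw [hG, entCLM]
        rfl
    rw [hxa]
    exact hLip i k x hx
  set δ : NNReal := Real.toNNReal Dr with hδ
  have hδcoe : (δ : ℝ) = Dr := Real.coe_toNNReal _ hDr0.le
  have happrox : ApproximatesLinearOn f (A : Eu d →L[ℝ] Eu d) (Metric.ball a r₁) δ := by
    intro x hx y hy
    have h := (convex_ball a r₁).norm_image_sub_le_of_norm_fderiv_le'
      (fun z hz => hfx z (hsub hz)) (fun z hz => hDfbound z hz) hy hx
    rw [hδcoe]
    exact h
  have hcδ : δ < ‖(A.symm : Eu d →L[ℝ] Eu d)‖₊⁻¹ := by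
    rw [← NNReal.coe_lt_coe, NNReal.coe_inv, coe_nnnorm, hδcoe]
    have h1 : Dr ≤ (2 * d * J)⁻¹ := fact1
    have h2 : (2 * (d:ℝ) * J)⁻¹ < J⁻¹ := by
      apply inv_strictAnti₀ hJ0
      nlinarith
    have h3 : J⁻¹ ≤ ‖(A.symm : Eu d →L[ℝ] Eu d)‖⁻¹ := inv_anti₀ hNApos hNA
    linarith
  have hcOr : Subsingleton (Eu d) ∨ δ < ‖(A.symm : Eu d →L[ℝ] Eu d)‖₊⁻¹ := Or.inr hcδ
  -- injectivity
  have hinj : Set.InjOn f (Metric.ball a r₁) := happrox.injOn hcOr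
  -- open image
  have hopen : IsOpen (f '' Metric.ball a r₁) :=
    happrox.open_image A.toNonlinearRightInverse Metric.isOpen_ball (Or.inr hcδ)
  -- ball coverage
  have hc2 : Metric.closedBall a (r₁/2) ⊆ Metric.ball a r₁ :=
    Metric.closedBall_subset_ball (by linarith)
  have hsurj := (happrox.mono_set hc2).surjOn_closedBall_of_nonlinearRightInverse
    A.toNonlinearRightInverse (by linarith : (0:ℝ) ≤ r₁/2) (subset_refl _)
  have hrad : r₂ ≤ ((A.toNonlinearRightInverse.nnnorm : ℝ)⁻¹ - (δ:ℝ)) * (r₁/2) := by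
    have h1 : ((A.toNonlinearRightInverse.nnnorm : ℝ)) = ‖(A.symm : Eu d →L[ℝ] Eu d)‖ := rfl
    rw [h1, hδcoe]
    have h2 : J⁻¹ ≤ ‖(A.symm : Eu d →L[ℝ] Eu d)‖⁻¹ := inv_anti₀ hNApos hNA
    have h3 : Dr ≤ (2*J)⁻¹ := by
      refine le_trans fact1 (inv_anti₀ (by positivity) ?_)
      nlinarith
    have h4 : r₁/(4*J) = (J⁻¹ - (2*J)⁻¹) * (r₁/2) := by
      field_simp
      ring
    calc r₂ ≤ r₁/(4*J) := fact2
      _ = (J⁻¹ - (2*J)⁻¹) * (r₁/2) := h4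
      _ ≤ (‖(A.symm : Eu d →L[ℝ] Eu d)‖⁻¹ - Dr) * (r₁/2) := by
          apply mul_le_mul_of_nonneg_right _ (by linarith)
          have := sub_le_sub h2 h3
          linarith [this]
  have hball2 : Metric.ball b r₂ ⊆ f '' Metric.ball a r₁ := by
    intro y hy
    have hy' : y ∈ Metric.closedBall (f a)
        (((A.toNonlinearRightInverse.nnnorm : ℝ)⁻¹ - (δ:ℝ)) * (r₁/2)) := by
      rw [hb] at hy
      exact Metric.mem_closedBall.mpr (le_trans (le_of_lt (Metric.mem_ball.mp hy)) hrad)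
    obtain ⟨x, hx, hfx'⟩ := hsurj hy'
    exact ⟨x, hc2 hx, hfx'⟩
  -- the inverse map
  set Φ := happrox.toOpenPartialHomeomorph f (Metric.ball a r₁) hcOr Metric.isOpen_ball with hΦ
  refine ⟨hinj, hopen, hball2, Φ.symm, ?_, ?_⟩
  · intro x hx
    exact Φ.left_inv (show x ∈ Φ.source from hx)
  · intro y hy
    obtain ⟨x, hx, rfl⟩ := hy
    have hxΩ : x ∈ Ω := hsub hx
    set T := fderiv ℝ f x with hT
    have hanti : ∀ v : Eu d, ‖v‖ ≤ (2*J) * ‖T v‖ := by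
      intro v
      have h1 : ‖v‖ ≤ J * ‖(A : Eu d →L[ℝ] Eu d) v‖ := by
        have hva : v = (A.symm : Eu d →L[ℝ] Eu d) ((A : Eu d →L[ℝ] Eu d) v) :=
          (A.symm_apply_apply v).symm
        calc ‖v‖ = ‖(A.symm : Eu d →L[ℝ] Eu d) ((A : Eu d →L[ℝ] Eu d) v)‖ := by rw [← hva]
          _ ≤ ‖(A.symm : Eu d →L[ℝ] Eu d)‖ * ‖(A : Eu d →L[ℝ] Eu d) v‖ :=
              ContinuousLinearMap.le_opNorm _ _
          _ ≤ J * ‖(A : Eu d →L[ℝ] Eu d) v‖ :=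
              mul_le_mul_of_nonneg_right hNA (norm_nonneg _)
      have h3 : ‖(A : Eu d →L[ℝ] Eu d) v - T v‖ ≤ Dr * ‖v‖ := by
        calc ‖(A : Eu d →L[ℝ] Eu d) v - T v‖ = ‖(T - (A : Eu d →L[ℝ] Eu d)) v‖ := by
              rw [ContinuousLinearMap.sub_apply, norm_sub_rev]
          _ ≤ ‖T - (A : Eu d →L[ℝ] Eu d)‖ * ‖v‖ := ContinuousLinearMap.le_opNorm _ _
          _ ≤ Dr * ‖v‖ := mul_le_mul_of_nonneg_right (hDfbound x hx) (norm_nonneg _)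
      have h2 : ‖(A : Eu d →L[ℝ] Eu d) v‖ ≤ ‖T v‖ + Dr * ‖v‖ := by
        have h6 : ‖(A : Eu d →L[ℝ] Eu d) v‖
            ≤ ‖T v‖ + ‖(A : Eu d →L[ℝ] Eu d) v - T v‖ := by
          have := norm_add_le (T v) ((A : Eu d →L[ℝ] Eu d) v - T v)
          simpa using this
        linarith
      have h5 : J * Dr ≤ 1/2 := by
        have h7 : J * Dr ≤ J * (2*d*J)⁻¹ := mul_le_mul_of_nonneg_left fact1 hJ0.le
        have h8 : J * (2*(d:ℝ)*J)⁻¹ = (2*(d:ℝ))⁻¹ := by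
          field_simp
        have h9 : (2*(d:ℝ))⁻¹ ≤ 1/2 := by
          rw [one_div]
          apply inv_anti₀ (by norm_num)
          linarith
        linarith
      nlinarith [mul_le_mul_of_nonneg_left h2 hJ0.le, norm_nonneg v, norm_nonneg (T v),
        mul_le_mul_of_nonneg_right h5 (norm_nonneg v)]
    have hTinj : Function.Injective T := by
      intro u v huv
      have h0 : T (u - v) = 0 := by rw [map_sub, huv, sub_self]
      have h6 := hanti (u - v)
      rw [h0, norm_zero, mul_zero] at h6
      have : ‖u - v‖ = 0 := le_antisymm h6 (norm_nonneg _)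
      rwa [norm_eq_zero, sub_eq_zero] at this
    have hTbij : Function.Bijective (T : Eu d →ₗ[ℝ] Eu d) :=
      ⟨hTinj, LinearMap.injective_iff_surjective.mp hTinj⟩
    set e : Eu d ≃L[ℝ] Eu d :=
      (LinearEquiv.ofBijective (T : Eu d →ₗ[ℝ] Eu d) hTbij).toContinuousLinearEquiv with he
    have hecoe : (e : Eu d →L[ℝ] Eu d) = T := by
      apply ContinuousLinearMap.ext
      intro v
      rfl
    have hyt : f x ∈ Φ.target := Set.mem_image_of_mem f hx
    have hsx : Φ.symm (f x) = x := Φ.left_inv (show x ∈ Φ.source from hx)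
    have hcd : ContDiffAt ℝ 2 Φ.symm (f x) := by
      apply Φ.contDiffAt_symm (f₀' := e) hyt
      · rw [hsx]
        have : HasFDerivAt f T x := (hfx x hxΩ).hasFDerivAt
        rw [hecoe]
        exact this
      · rw [hsx]
        exact hf.contDiffAt (hΩ.mem_nhds hxΩ)
    exact hcd.contDiffWithinAt
end
end

section
/- Let d ≥ 1, let Ω ⊆ ℝ^d be open, and let Φ : Ω → ℝ be C³ with |D^ν Φ(x)| ≤ A for all x ∈ Ω and all multi-indices ν with 2 ≤ |ν| ≤ 3. Let x̃ ∈ Ω be a critical point, DΦ(x̃) = 0, with |det(D²Φ(x̃))| ≥ c > 0. Then there exist r* > 0 and c′ > 0, depending only on d, A and c, such that for every x ∈ Ω with |x − x̃| < r* and with the segment from x̃ to x contained in Ω, one has |DΦ(x)| ≥ c′·|x − x̃|. -/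
noncomputable section

open Real MeasureTheory Pointwise

namespace Stmt15Aux

open EuclideanSpace Finset

lemma abs_coord_le_norm {d : ℕ} (w : Eu d) (i : Fin d) : |w i| ≤ ‖w‖ := by
  rw [EuclideanSpace.norm_eq, show |w i| = Real.sqrt ((w i) ^ 2) by rw [Real.sqrt_sq_eq_abs]]
  apply Real.sqrt_le_sqrt
  have := Finset.single_le_sum (f := fun j => ‖w j‖ ^ 2) (fun j _ => sq_nonneg _)
    (Finset.mem_univ i)
  simpa [Real.norm_eq_abs, sq_abs] using this

lemma sum_coord_smul {d : ℕ} (w : Eu d) :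
    ∑ i, w i • EuclideanSpace.single i (1 : ℝ) = w := by
  have := (EuclideanSpace.basisFun (Fin d) ℝ).sum_repr w
  simpa [EuclideanSpace.basisFun_apply, EuclideanSpace.basisFun_repr] using this

lemma clm_eval_expand {d : ℕ} (L : Eu d →L[ℝ] ℝ) (w : Eu d) :
    L w = ∑ i, w i * L (EuclideanSpace.single i 1) := by
  conv_lhs => rw [← sum_coord_smul w]
  rw [map_sum]
  simp [smul_eq_mul]

lemma norm_le_sum_coord {d : ℕ} (w : Eu d) : ‖w‖ ≤ ∑ i, |w i| := by
  conv_lhs => rw [← sum_coord_smul w]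
  refine le_trans (norm_sum_le _ _) (Finset.sum_le_sum fun i _ => ?_)
  rw [norm_smul, EuclideanSpace.norm_single]
  simp [Real.norm_eq_abs]

lemma clm_norm_le {d : ℕ} (L : Eu d →L[ℝ] ℝ) {C : ℝ} (hC : 0 ≤ C)
    (h : ∀ i, |L (EuclideanSpace.single i 1)| ≤ C) : ‖L‖ ≤ d * C := by
  refine ContinuousLinearMap.opNorm_le_bound _ (by positivity) fun w => ?_
  rw [clm_eval_expand]
  calc ‖∑ i, w i * L (EuclideanSpace.single i 1)‖
      ≤ ∑ i, ‖w i * L (EuclideanSpace.single i 1)‖ := norm_sum_le _ _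
    _ ≤ ∑ _i : Fin d, ‖w‖ * C := by
        refine Finset.sum_le_sum fun i _ => ?_
        rw [Real.norm_eq_abs, abs_mul]
        exact mul_le_mul (abs_coord_le_norm w i) (h i) (abs_nonneg _) (norm_nonneg _)
    _ = ↑d * C * ‖w‖ := by simp [Finset.sum_const]; ring

lemma adjugate_bound {d : ℕ} (M : Matrix (Fin d) (Fin d) ℝ) {a : ℝ} (ha : 1 ≤ a)
    (hM : ∀ i j, |M i j| ≤ a) (i j : Fin d) :
    |M.adjugate i j| ≤ (d.factorial : ℝ) * a ^ d := by
  rw [Matrix.adjugate_apply]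
  have hb : ∀ k l, AbsoluteValue.abs ((M.updateRow j (Pi.single i 1)) k l) ≤ a := by
    intro k l
    rw [Matrix.updateRow_apply]
    split
    · by_cases hli : l = i <;> simp [Pi.single_apply, hli] <;> linarith
    · exact hM k l
  have := Matrix.det_le hb
  simpa [Fintype.card_fin, nsmul_eq_mul] using this

lemma matrix_lower {d : ℕ} (hd : 1 ≤ d) (M : Matrix (Fin d) (Fin d) ℝ) {E c : ℝ}
    (hc : 0 ≤ c) (hadj : ∀ i j, |M.adjugate i j| ≤ E) (hdet : c ≤ |M.det|) (v : Eu d) :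
    ∃ j, c * ‖v‖ ≤ (d : ℝ) ^ 2 * E * |Matrix.mulVec M (fun i => v i) j| := by
  haveI : Nonempty (Fin d) := ⟨⟨0, hd⟩⟩
  obtain ⟨j, -, hj⟩ := Finset.exists_max_image Finset.univ
    (fun j => |Matrix.mulVec M (fun i => v i) j|) ⟨Classical.arbitrary _, Finset.mem_univ _⟩
  refine ⟨j, ?_⟩
  have habs : 0 ≤ |Matrix.mulVec M (fun i => v i) j| := abs_nonneg _
  have hE : 0 ≤ E := le_trans (abs_nonneg _) (hadj j j)
  have key : ∀ i, c * |v i| ≤ (d : ℝ) * (E * |Matrix.mulVec M (fun i => v i) j|) := by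
    intro i
    have h1 : M.det • (fun i => v i) =
        Matrix.mulVec M.adjugate (Matrix.mulVec M (fun i => v i)) := by
      rw [Matrix.mulVec_mulVec, Matrix.adjugate_mul, Matrix.smul_mulVec,
        Matrix.one_mulVec]
    have h2 : M.det * v i = ∑ k, M.adjugate i k * Matrix.mulVec M (fun i => v i) k := by
      have := congrFun h1 i
      simpa [Matrix.mulVec, dotProduct] using this
    calc c * |v i| ≤ |M.det| * |v i| :=
          mul_le_mul_of_nonneg_right hdet (abs_nonneg _)
      _ = |M.det * v i| := (abs_mul _ _).symm
      _ = |∑ k, M.adjugate i k * Matrix.mulVec M (fun i => v i) k| := by rw [h2]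
      _ ≤ ∑ k, |M.adjugate i k * Matrix.mulVec M (fun i => v i) k| :=
          Finset.abs_sum_le_sum_abs _ _
      _ ≤ ∑ _k : Fin d, E * |Matrix.mulVec M (fun i => v i) j| := by
          refine Finset.sum_le_sum fun k _ => ?_
          rw [abs_mul]
          exact mul_le_mul (hadj i k) (hj k (Finset.mem_univ k)) (abs_nonneg _) hE
      _ = (d : ℝ) * (E * |Matrix.mulVec M (fun i => v i) j|) := by simp [Finset.sum_const]
  calc c * ‖v‖ ≤ c * ∑ i, |v i| :=
        mul_le_mul_of_nonneg_left (norm_le_sum_coord v) hc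
    _ = ∑ i, c * |v i| := Finset.mul_sum _ _ _
    _ ≤ ∑ _i : Fin d, (d : ℝ) * (E * |Matrix.mulVec M (fun i => v i) j|) :=
        Finset.sum_le_sum fun i _ => key i
    _ = (d : ℝ) ^ 2 * E * |Matrix.mulVec M (fun i => v i) j| := by
        simp [Finset.sum_const]; ring

lemma mvt_seg {d : ℕ} {f : Eu d → ℝ} {x₀ x : Eu d} {C : ℝ}
    (hdiff : ∀ z ∈ segment ℝ x₀ x, DifferentiableAt ℝ f z)
    (hb : ∀ z ∈ segment ℝ x₀ x, ‖fderiv ℝ f z‖ ≤ C)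
    {y : Eu d} (hy : y ∈ segment ℝ x₀ x) : |f y - f x₀| ≤ C * ‖y - x₀‖ := by
  have := (convex_segment x₀ x).norm_image_sub_le_of_norm_hasFDerivWithin_le
    (f' := fun z => fderiv ℝ f z)
    (fun z hz => (hdiff z hz).hasFDerivAt.hasFDerivWithinAt) hb
    (left_mem_segment ℝ x₀ x) hy
  simpa [Real.norm_eq_abs] using this

lemma seg_norm_le {d : ℕ} {x₀ x y : Eu d} (hy : y ∈ segment ℝ x₀ x) :
    ‖y - x₀‖ ≤ ‖x - x₀‖ := by
  obtain ⟨a, b, ha, hb, hab, rfl⟩ := hy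
  have h1 : a • x₀ + b • x - x₀ = b • (x - x₀) := by
    rw [show a = 1 - b by linarith, sub_smul, one_smul, smul_sub]
    abel
  rw [h1, norm_smul, Real.norm_eq_abs, abs_of_nonneg hb]
  have hb1 : b ≤ 1 := by linarith
  nlinarith [norm_nonneg (x - x₀)]

end Stmt15Aux

set_option maxHeartbeats 1000000 in
/-- gradient lower bound near a nondegenerate critical point. -/
theorem stmt15 (d : ℕ) (hd : 1 ≤ d) (A c : ℝ) (hA : 0 < A) (hc : 0 < c) :
    ∃ rs > 0, ∃ c' > 0, ∀ (Ω : Set (Eu d)) (Φ : Eu d → ℝ) (x₀ : Eu d),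
      IsOpen Ω → ContDiffOn ℝ 3 Φ Ω → x₀ ∈ Ω →
      (∀ L : List (Fin d), 2 ≤ L.length → L.length ≤ 3 → ∀ x ∈ Ω, |pd L Φ x| ≤ A) →
      fderiv ℝ Φ x₀ = 0 → c ≤ |(hess Φ x₀).det| →
      ∀ x ∈ Ω, ‖x - x₀‖ < rs → segment ℝ x₀ x ⊆ Ω →
        c' * ‖x - x₀‖ ≤ ‖fderiv ℝ Φ x‖ := by
  classical
  have hd0 : (0:ℝ) < d := by exact_mod_cast hd
  have hfac1 : (1:ℝ) ≤ (d.factorial : ℝ) := by exact_mod_cast d.factorial_pos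
  have hmax1 : (1:ℝ) ≤ (max A 1) ^ d := one_le_pow₀ (le_max_right A 1)
  have hE1 : (1:ℝ) ≤ (d.factorial : ℝ) * (max A 1) ^ d := by nlinarith
  have hEpos : (0:ℝ) < (d.factorial : ℝ) * (max A 1) ^ d := lt_of_lt_of_le one_pos hE1
  refine ⟨c / (2 * (d:ℝ)^4 * A * ((d.factorial : ℝ) * (max A 1) ^ d)), by positivity,
    c / (2 * (d:ℝ)^2 * ((d.factorial : ℝ) * (max A 1) ^ d)), by positivity, ?_⟩
  intro Ω Φ x₀ hΩ hΦ hx₀ hbound hcrit hdet x hx hxr hseg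
  rcases eq_or_ne x x₀ with rfl | hne
  · simp
  have hvpos : 0 < ‖x - x₀‖ := by rw [norm_pos_iff]; exact sub_ne_zero.mpr hne
  -- differentiability infrastructure
  have hF2 : ContDiffOn ℝ 2 (fun y => fderiv ℝ Φ y) Ω :=
    hΦ.fderiv_of_isOpen hΩ (by norm_num)
  have hF'1 : ContDiffOn ℝ 1 (fun y => fderiv ℝ (fderiv ℝ Φ) y) Ω :=
    hF2.fderiv_of_isOpen hΩ (by norm_num)
  have hFd : ∀ y ∈ Ω, DifferentiableAt ℝ (fderiv ℝ Φ) y := fun y hy =>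
    ((hF2.differentiableOn (by norm_num)) y hy).differentiableAt (hΩ.mem_nhds hy)
  have hF'd : ∀ y ∈ Ω, DifferentiableAt ℝ (fderiv ℝ (fderiv ℝ Φ)) y := fun y hy =>
    ((hF'1.differentiableOn one_ne_zero) y hy).differentiableAt (hΩ.mem_nhds hy)
  -- derivative of evaluation maps
  have heval : ∀ y ∈ Ω, ∀ u : Eu d,
      fderiv ℝ (fun z => fderiv ℝ Φ z u) y = (fderiv ℝ (fderiv ℝ Φ) y).flip u := by
    intro y hy u
    rw [fderiv_clm_apply (hFd y hy) (differentiableAt_const u)]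
    ext w
    simp
  -- pd identities
  have hpd2 : ∀ y ∈ Ω, ∀ i j : Fin d, pd [i, j] Φ y =
      fderiv ℝ (fderiv ℝ Φ) y (EuclideanSpace.single i 1) (EuclideanSpace.single j 1) := by
    intro y hy i j
    have h0 : pd [i, j] Φ y =
        fderiv ℝ (fun z => fderiv ℝ Φ z (EuclideanSpace.single j 1)) y
          (EuclideanSpace.single i 1) := rfl
    rw [h0, heval y hy (EuclideanSpace.single j 1)]
    simp
  have hpd3 : ∀ y ∈ Ω, ∀ i j k : Fin d, pd [i, j, k] Φ y =
      fderiv ℝ (fun z => fderiv ℝ (fderiv ℝ Φ) z (EuclideanSpace.single j 1)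
        (EuclideanSpace.single k 1)) y (EuclideanSpace.single i 1) := by
    intro y hy i j k
    have h0 : pd [i, j, k] Φ y =
        fderiv ℝ (fun z => fderiv ℝ (fun w => fderiv ℝ Φ w (EuclideanSpace.single k 1)) z
          (EuclideanSpace.single j 1)) y (EuclideanSpace.single i 1) := rfl
    have heq : (fun z => fderiv ℝ (fun w => fderiv ℝ Φ w (EuclideanSpace.single k 1)) z
          (EuclideanSpace.single j 1)) =ᶠ[nhds y]
        fun z => fderiv ℝ (fderiv ℝ Φ) z (EuclideanSpace.single j 1)
          (EuclideanSpace.single k 1) := by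
      filter_upwards [hΩ.mem_nhds hy] with z hz
      rw [heval z hz (EuclideanSpace.single k 1)]
      simp
    rw [h0, heq.fderiv_eq]
  -- Lipschitz bound for the second derivative along the segment
  have hstep1 : ∀ y ∈ segment ℝ x₀ x, ∀ i j : Fin d,
      |fderiv ℝ (fderiv ℝ Φ) y (EuclideanSpace.single i 1) (EuclideanSpace.single j 1) -
        fderiv ℝ (fderiv ℝ Φ) x₀ (EuclideanSpace.single i 1) (EuclideanSpace.single j 1)|
        ≤ (d:ℝ) * A * ‖x - x₀‖ := by
    intro y hy i j
    have hdiff : ∀ z ∈ segment ℝ x₀ x, DifferentiableAt ℝ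
        (fun z => fderiv ℝ (fderiv ℝ Φ) z (EuclideanSpace.single i 1)
          (EuclideanSpace.single j 1)) z := fun z hz =>
      (((hF'd z (hseg hz)).clm_apply (differentiableAt_const _)).clm_apply
        (differentiableAt_const _))
    have hbnd : ∀ z ∈ segment ℝ x₀ x, ‖fderiv ℝ
        (fun z => fderiv ℝ (fderiv ℝ Φ) z (EuclideanSpace.single i 1)
          (EuclideanSpace.single j 1)) z‖ ≤ (d:ℝ) * A := by
      intro z hz
      refine Stmt15Aux.clm_norm_le _ hA.le fun k => ?_
      rw [← hpd3 z (hseg hz) k i j]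
      exact hbound [k, i, j] (by norm_num) (by norm_num) z (hseg hz)
    have h1 := Stmt15Aux.mvt_seg hdiff hbnd hy
    have h2 : ‖y - x₀‖ ≤ ‖x - x₀‖ := Stmt15Aux.seg_norm_le hy
    have h3 : (0:ℝ) ≤ (d:ℝ) * A := by positivity
    nlinarith
  -- the Hessian as the second derivative
  have hHij : ∀ i j, hess Φ x₀ i j =
      fderiv ℝ (fderiv ℝ Φ) x₀ (EuclideanSpace.single i 1) (EuclideanSpace.single j 1) :=
    fun i j => hpd2 x₀ hx₀ i j
  -- matrix lower bound
  have hMentry : ∀ i j, |(Matrix.transpose (hess Φ x₀)) i j| ≤ max A 1 := by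
    intro i j
    rw [Matrix.transpose_apply]
    have h0 : hess Φ x₀ j i = pd [j, i] Φ x₀ := rfl
    rw [h0]
    exact le_trans (hbound [j, i] (by norm_num) (by norm_num) x₀ hx₀) (le_max_left _ _)
  have hadj : ∀ i j, |((Matrix.transpose (hess Φ x₀))).adjugate i j| ≤ (d.factorial : ℝ) * (max A 1) ^ d :=
    fun i j => Stmt15Aux.adjugate_bound _ (le_max_right A 1) hMentry i j
  obtain ⟨j, hj⟩ := Stmt15Aux.matrix_lower hd ((Matrix.transpose (hess Φ x₀))) hc.le hadj
    (by rw [Matrix.det_transpose]; exact hdet) (x - x₀)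
  -- link the matrix-vector product with the second derivative
  have hlink : Matrix.mulVec ((Matrix.transpose (hess Φ x₀))) (fun i => (x - x₀) i) j =
      fderiv ℝ (fderiv ℝ Φ) x₀ (x - x₀) (EuclideanSpace.single j 1) := by
    have h1 : fderiv ℝ (fderiv ℝ Φ) x₀ (x - x₀) (EuclideanSpace.single j 1) =
        ((fderiv ℝ (fderiv ℝ Φ) x₀).flip (EuclideanSpace.single j 1)) (x - x₀) := rfl
    rw [h1, Stmt15Aux.clm_eval_expand]
    simp only [Matrix.mulVec, dotProduct, Matrix.transpose_apply,
      ContinuousLinearMap.flip_apply]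
    refine Finset.sum_congr rfl fun i _ => ?_
    beta_reduce; rw [hHij i j, mul_comm]
  -- Taylor estimate
  have hstep3 : |fderiv ℝ Φ x (EuclideanSpace.single j 1) -
      fderiv ℝ (fderiv ℝ Φ) x₀ (x - x₀) (EuclideanSpace.single j 1)|
      ≤ (d:ℝ) * ((d:ℝ) * A * ‖x - x₀‖) * ‖x - x₀‖ := by
    have hφd : ∀ z ∈ Ω, DifferentiableAt ℝ (fun z => fderiv ℝ Φ z (EuclideanSpace.single j 1) -
        (fderiv ℝ (fderiv ℝ Φ) x₀).flip (EuclideanSpace.single j 1) z) z := fun z hz =>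
      ((hFd z hz).clm_apply (differentiableAt_const _)).sub
        (((fderiv ℝ (fderiv ℝ Φ) x₀).flip (EuclideanSpace.single j 1)).differentiable.differentiableAt)
    have hφ' : ∀ z ∈ Ω, fderiv ℝ (fun z => fderiv ℝ Φ z (EuclideanSpace.single j 1) -
        (fderiv ℝ (fderiv ℝ Φ) x₀).flip (EuclideanSpace.single j 1) z) z =
        (fderiv ℝ (fderiv ℝ Φ) z).flip (EuclideanSpace.single j 1) -
        (fderiv ℝ (fderiv ℝ Φ) x₀).flip (EuclideanSpace.single j 1) := by
      intro z hz
      rw [fderiv_fun_sub ((hFd z hz).clm_apply (differentiableAt_const _))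
        (ContinuousLinearMap.differentiableAt _), heval z hz, ContinuousLinearMap.fderiv]
    have hφbnd : ∀ z ∈ segment ℝ x₀ x, ‖fderiv ℝ
        (fun z => fderiv ℝ Φ z (EuclideanSpace.single j 1) -
          (fderiv ℝ (fderiv ℝ Φ) x₀).flip (EuclideanSpace.single j 1) z) z‖
        ≤ (d:ℝ) * ((d:ℝ) * A * ‖x - x₀‖) := by
      intro z hz
      rw [hφ' z (hseg hz)]
      refine Stmt15Aux.clm_norm_le _ (by positivity) fun i => ?_
      simp only [ContinuousLinearMap.sub_apply, ContinuousLinearMap.flip_apply]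
      exact hstep1 z hz i j
    have hmvt := Stmt15Aux.mvt_seg (fun z hz => hφd z (hseg hz)) hφbnd
      (right_mem_segment ℝ x₀ x)
    have hF0 : fderiv ℝ Φ x₀ (EuclideanSpace.single j 1) = 0 := by rw [hcrit]; rfl
    have hflip : (fderiv ℝ (fderiv ℝ Φ) x₀).flip (EuclideanSpace.single j 1) x -
        (fderiv ℝ (fderiv ℝ Φ) x₀).flip (EuclideanSpace.single j 1) x₀ =
        fderiv ℝ (fderiv ℝ Φ) x₀ (x - x₀) (EuclideanSpace.single j 1) := by
      rw [← map_sub]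
      rfl
    calc |fderiv ℝ Φ x (EuclideanSpace.single j 1) -
        fderiv ℝ (fderiv ℝ Φ) x₀ (x - x₀) (EuclideanSpace.single j 1)|
        = |(fderiv ℝ Φ x (EuclideanSpace.single j 1) -
            (fderiv ℝ (fderiv ℝ Φ) x₀).flip (EuclideanSpace.single j 1) x) -
          (fderiv ℝ Φ x₀ (EuclideanSpace.single j 1) -
            (fderiv ℝ (fderiv ℝ Φ) x₀).flip (EuclideanSpace.single j 1) x₀)| := by
          rw [hF0]
          rw [show (fderiv ℝ Φ x (EuclideanSpace.single j 1) -
            (fderiv ℝ (fderiv ℝ Φ) x₀).flip (EuclideanSpace.single j 1) x) -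
            ((0:ℝ) - (fderiv ℝ (fderiv ℝ Φ) x₀).flip (EuclideanSpace.single j 1) x₀) =
            fderiv ℝ Φ x (EuclideanSpace.single j 1) -
            ((fderiv ℝ (fderiv ℝ Φ) x₀).flip (EuclideanSpace.single j 1) x -
             (fderiv ℝ (fderiv ℝ Φ) x₀).flip (EuclideanSpace.single j 1) x₀) by ring, hflip]
      _ ≤ (d:ℝ) * ((d:ℝ) * A * ‖x - x₀‖) * ‖x - x₀‖ := hmvt
  -- put everything together
  have hop : |fderiv ℝ Φ x (EuclideanSpace.single j 1)| ≤ ‖fderiv ℝ Φ x‖ := by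
    have := (fderiv ℝ Φ x).le_opNorm (EuclideanSpace.single j (1:ℝ))
    rw [EuclideanSpace.norm_single] at this
    simpa [Real.norm_eq_abs] using this
  rw [hlink] at hj
  -- abbreviations for arithmetic
  set V := ‖x - x₀‖ with hV
  set Ea := (d.factorial : ℝ) * (max A 1) ^ d with hEa
  have hsmall : (d:ℝ) * ((d:ℝ) * A * V) * V ≤ c / (2 * (d:ℝ)^2 * Ea) * V := by
    have hxr' : V ≤ c / (2 * (d:ℝ)^4 * A * Ea) := le_of_lt hxr
    have key : (d:ℝ) * ((d:ℝ) * A * V) ≤ c / (2 * (d:ℝ)^2 * Ea) := by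
      have h1 : (d:ℝ)^2 * A * V ≤ (d:ℝ)^2 * A * (c / (2 * (d:ℝ)^4 * A * Ea)) :=
        mul_le_mul_of_nonneg_left hxr' (by positivity)
      have h2 : (d:ℝ)^2 * A * (c / (2 * (d:ℝ)^4 * A * Ea)) = c / (2 * (d:ℝ)^2 * Ea) := by
        rw [hEa]
        field_simp
        try ring
      have h3 : (d:ℝ) * ((d:ℝ) * A * V) = (d:ℝ)^2 * A * V := by ring
      rw [h3, ← h2]
      exact h1
    exact mul_le_mul_of_nonneg_right key (le_of_lt hvpos)
  have htri : c / (2 * (d:ℝ)^2 * Ea) * V + (c / (2 * (d:ℝ)^2 * Ea)) * V ≤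
      |fderiv ℝ (fderiv ℝ Φ) x₀ (x - x₀) (EuclideanSpace.single j 1)| := by
    have h2 : (0:ℝ) < (d:ℝ)^2 * Ea := by rw [hEa]; positivity
    have h3 : c / ((d:ℝ)^2 * Ea) * V ≤
        |fderiv ℝ (fderiv ℝ Φ) x₀ (x - x₀) (EuclideanSpace.single j 1)| := by
      rw [div_mul_eq_mul_div, div_le_iff₀ h2]
      linarith [hj]
    have h4 : c / (2 * (d:ℝ)^2 * Ea) * V + c / (2 * (d:ℝ)^2 * Ea) * V =
        c / ((d:ℝ)^2 * Ea) * V := by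
      have hEa0 : Ea ≠ 0 := ne_of_gt (lt_of_lt_of_le one_pos hE1)
      have hd0' : (d:ℝ) ≠ 0 := ne_of_gt hd0
      field_simp
      ring
    rw [h4]
    exact h3
  have habs : |fderiv ℝ (fderiv ℝ Φ) x₀ (x - x₀) (EuclideanSpace.single j 1)| -
      |fderiv ℝ Φ x (EuclideanSpace.single j 1) -
        fderiv ℝ (fderiv ℝ Φ) x₀ (x - x₀) (EuclideanSpace.single j 1)|
      ≤ |fderiv ℝ Φ x (EuclideanSpace.single j 1)| := by
    have := abs_sub_abs_le_abs_sub
      (fderiv ℝ (fderiv ℝ Φ) x₀ (x - x₀) (EuclideanSpace.single j 1))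
      (fderiv ℝ Φ x (EuclideanSpace.single j 1))
    have h2 := abs_sub_comm
      (fderiv ℝ (fderiv ℝ Φ) x₀ (x - x₀) (EuclideanSpace.single j 1))
      (fderiv ℝ Φ x (EuclideanSpace.single j 1))
    linarith
  linarith
end
end
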